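/- Suppose that |j|_v = 1 for every integer 1 ≤ j ≤ d (which holds whenever the residual characteristic of K is larger than d+1). Then G_v(c,a) = log⁺ max{|c|_v, |a|_v} for every (c,a) ∈ K^{d-1}. -/

import Mathlib

open Filter

noncomputable section

variable {K : Type*} [Field K]

/-- Elementary symmetric polynomial of degree `k` evaluated at `c = (c_1, …, c_{d-2})`. -/
def esymmK {n : ℕ} (c : Fin n → K) (k : ℕ) : K :=
  ∑ s ∈ Finset.powersetCard k (Finset.univ : Finset (Fin n)), ∏ i ∈ s, c i

/-- The polynomial `P_{c,a}` of degree `d = n + 2`: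
`P_{c,a}(z) = z^d/d + ∑_{j=2}^{d-1} (-1)^{d-j} σ_{d-j}(c) z^j / j + a^d`. -/
def Pca {n : ℕ} (c : Fin n → K) (a z : K) : K :=
  z ^ (n + 2) / ((n + 2 : ℕ) : K)
    + ∑ j ∈ Finset.Icc 2 (n + 1),
        ((-1 : K) ^ (n + 2 - j) * esymmK c (n + 2 - j) * z ^ j) / ((j : ℕ) : K)
    + a ^ (n + 2)

/-- The critical points `c_0 = 0, c_1, …, c_{d-2}` of `P_{c,a}`. -/
def crit {n : ℕ} (c : Fin n → K) (i : Fin (n + 1)) : K :=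
  if h : (i : ℕ) = 0 then 0 else c ⟨(i : ℕ) - 1, by have := i.isLt; omega⟩

/-- `|c|_v = max_{1 ≤ i ≤ d-2} |c_i|_v` (with value `0` when there are no `c_i`'s). -/
def cnorm {n : ℕ} (v : AbsoluteValue K ℝ) (c : Fin n → K) : ℝ :=
  Finset.fold max 0 (fun i => v (c i)) (Finset.univ : Finset (Fin n))

/-- `α_v = max_{1 ≤ j ≤ d} |j|_v⁻¹`. -/
def alphaV (v : AbsoluteValue K ℝ) (d : ℕ) : ℝ :=
  Finset.fold max 0 (fun j : ℕ => (v ((j : ℕ) : K))⁻¹) (Finset.Icc 1 d)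

/-- `C_v(c,a) = max{ |d|_v^{1/(d-1)}, |d|_v^{1/d}·|a|_v,
max_{2≤j≤d-1} (|σ_{d-j}(c)|_v · |d/j|_v)^{1/(d-j)} }`, with `d = n + 2`. -/
def Cv {n : ℕ} (v : AbsoluteValue K ℝ) (c : Fin n → K) (a : K) : ℝ :=
  max ((v (((n + 2 : ℕ) : K))) ^ ((1 : ℝ) / ((n : ℝ) + 1)))
    (max ((v (((n + 2 : ℕ) : K))) ^ ((1 : ℝ) / ((n : ℝ) + 2)) * v a)
      (Finset.fold max 0
        (fun j : ℕ =>
          (v (esymmK c (n + 2 - j)) * v (((n + 2 : ℕ) : K) / ((j : ℕ) : K)))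
            ^ ((1 : ℝ) / ((n + 2 - j : ℕ) : ℝ)))
        (Finset.Icc 2 (n + 1))))

/-- `C̃_v(c,a) = max{ |a|_v, |c|_v, C_v(c,a) }`. -/
def Ctilde {n : ℕ} (v : AbsoluteValue K ℝ) (c : Fin n → K) (a : K) : ℝ :=
  max (v a) (max (cnorm v c) (Cv v c a))

/-- `h_{c,a,v}(z) = log max{ C̃_v(c,a), |z|_v }`. -/
def hca {n : ℕ} (v : AbsoluteValue K ℝ) (c : Fin n → K) (a : K) (z : K) : ℝ :=
  Real.log (max (Ctilde v c a) (v z))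

/-- `log⁺ = max{0, log}`. -/
def logPlus (x : ℝ) : ℝ := max 0 (Real.log x)

/-- `U_i(ε, C) = {(c,a) : max{|c|_v,|a|_v} ≥ C and |P_{c,a}(c_i)|_v ≥ ε·max{|c|_v,|a|_v}^d}`. -/
def Uset {n : ℕ} (v : AbsoluteValue K ℝ) (i : Fin (n + 1)) (ε C : ℝ) :
    Set ((Fin n → K) × K) :=
  {p | C ≤ max (cnorm v p.1) (v p.2) ∧
       ε * max (cnorm v p.1) (v p.2) ^ (n + 2) ≤ v (Pca p.1 p.2 (crit p.1 i))}

/- ===================== Auxiliary development ===================== -/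

section Aux

variable {K : Type*} [Field K] (v : AbsoluteValue K ℝ)

lemma s6_vsum_le (hv : ∀ x y : K, v (x + y) ≤ max (v x) (v y)) {ι : Type*} (s : Finset ι)
    (f : ι → K) {B : ℝ} (hB : 0 ≤ B) (h : ∀ i ∈ s, v (f i) ≤ B) :
    v (∑ i ∈ s, f i) ≤ B := by
  classical
  induction s using Finset.induction_on with
  | empty => simpa using hB
  | @insert a s ha ih =>
      rw [Finset.sum_insert ha]
      exact (hv _ _).trans (max_le (h a (Finset.mem_insert_self a s))
        (ih fun i hi => h i (Finset.mem_insert_of_mem hi)))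

lemma s6_vprod_le {ι : Type*} (s : Finset ι)
    (f : ι → K) {B : ℝ} (hB : 0 ≤ B) (h : ∀ i ∈ s, v (f i) ≤ B) :
    v (∏ i ∈ s, f i) ≤ B ^ s.card := by
  classical
  induction s using Finset.induction_on with
  | empty => simp
  | @insert a s ha ih =>
      rw [Finset.prod_insert ha, Finset.card_insert_of_notMem ha, map_mul, pow_succ,
        mul_comm (B ^ s.card) B]
      exact mul_le_mul (h a (Finset.mem_insert_self a s))
        (ih fun i hi => h i (Finset.mem_insert_of_mem hi)) (v.nonneg _) hB

lemma s6_v_add_eq (hv : ∀ x y : K, v (x + y) ≤ max (v x) (v y)) {x y : K}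
    (h : v y < v x) : v (x + y) = v x := by
  refine le_antisymm ((hv x y).trans (by rw [max_eq_left h.le])) ?_
  have h2 := hv (x + y) (-y)
  rw [add_neg_cancel_right, v.map_neg] at h2
  rcases max_cases (v (x + y)) (v y) with ⟨he, _⟩ | ⟨he, _⟩
  · rw [he] at h2; exact h2
  · rw [he] at h2; linarith

lemma s6_cnorm_nonneg {n : ℕ} (c : Fin n → K) : 0 ≤ cnorm v c :=
  (Finset.le_fold_max _).2 (Or.inl le_rfl)

lemma s6_v_le_cnorm {n : ℕ} (c : Fin n → K) (i : Fin n) : v (c i) ≤ cnorm v c :=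
  (Finset.le_fold_max _).2 (Or.inr ⟨i, Finset.mem_univ i, le_rfl⟩)

lemma s6_cnorm_le {n : ℕ} {c : Fin n → K} {B : ℝ} (hB : 0 ≤ B)
    (h : ∀ i, v (c i) ≤ B) : cnorm v c ≤ B :=
  (Finset.fold_max_le _).2 ⟨hB, fun i _ => h i⟩

lemma s6_fold_attain {ι : Type*} (s : Finset ι) (f : ι → ℝ) :
    s.fold max 0 f = 0 ∨ ∃ i ∈ s, s.fold max 0 f = f i := by
  classical
  induction s using Finset.induction_on with
  | empty => exact Or.inl Finset.fold_empty
  | @insert a s ha ih =>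
      rw [Finset.fold_insert ha]
      rcases max_cases (f a) (s.fold max 0 f) with ⟨he, _⟩ | ⟨he, _⟩
      · exact Or.inr ⟨a, Finset.mem_insert_self a s, he⟩
      · rw [he]
        rcases ih with h | ⟨i, hi, hfi⟩
        · exact Or.inl h
        · exact Or.inr ⟨i, Finset.mem_insert_of_mem hi, hfi⟩

lemma s6_exists_cnorm_eq {n : ℕ} {c : Fin n → K} (h : 0 < cnorm v c) :
    ∃ i, v (c i) = cnorm v c := by
  rcases s6_fold_attain (Finset.univ : Finset (Fin n)) (fun i => v (c i)) with h0 | ⟨i, _, hi⟩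
  · exfalso; unfold cnorm at h; rw [h0] at h; exact lt_irrefl _ h
  · exact ⟨i, hi.symm⟩

lemma s6_v_esymm_le (hv : ∀ x y : K, v (x + y) ≤ max (v x) (v y)) {n : ℕ} (c : Fin n → K)
    (k : ℕ) {B : ℝ} (hB : 0 ≤ B) (h : ∀ i, v (c i) ≤ B) :
    v (esymmK c k) ≤ B ^ k := by
  apply s6_vsum_le v hv _ _ (pow_nonneg hB k)
  intro s hs
  have hcard := (Finset.mem_powersetCard.1 hs).2
  have := s6_vprod_le v s c hB (fun i _ => h i)
  rwa [hcard] at this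

/-- Under the hypothesis that `|j|_v = 1` for `1 ≤ j ≤ n+2`, we have
`C̃_v(c,a) = max 1 (max |c|_v |a|_v)`. -/
lemma s6_Ctilde_eq (hv : ∀ x y : K, v (x + y) ≤ max (v x) (v y)) {n : ℕ}
    (hj : ∀ j : ℕ, 1 ≤ j → j ≤ n + 2 → v ((j : ℕ) : K) = 1) (c : Fin n → K) (a : K) :
    Ctilde v c a = max 1 (max (cnorm v c) (v a)) := by
  have vd : v (((n + 2 : ℕ) : K)) = 1 := hj (n + 2) (by omega) le_rfl
  set M := max 1 (max (cnorm v c) (v a)) with hM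
  have h1M : (1 : ℝ) ≤ M := le_max_left _ _
  have hcM : cnorm v c ≤ M := (le_max_left _ _).trans (le_max_right _ _)
  have haM : v a ≤ M := (le_max_right _ _).trans (le_max_right _ _)
  have hM0 : (0 : ℝ) ≤ M := zero_le_one.trans h1M
  have hCv_le : Cv v c a ≤ M := by
    unfold Cv
    rw [vd]
    refine max_le (by rw [Real.one_rpow]; exact h1M)
      (max_le (by rw [Real.one_rpow, one_mul]; exact haM) ?_)
    refine (Finset.fold_max_le _).2 ⟨hM0, ?_⟩
    intro j hjmem
    rw [Finset.mem_Icc] at hjmem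
    have hj1 : v (((j : ℕ)) : K) = 1 := hj j (by omega) (by omega)
    have hdj : v ((((n + 2 : ℕ)) : K) / ((j : ℕ) : K)) = 1 := by
      rw [map_div₀, vd, hj1]; norm_num
    rw [hdj, mul_one]
    have hσ : v (esymmK c (n + 2 - j)) ≤ M ^ (n + 2 - j) :=
      s6_v_esymm_le v hv c _ hM0 (fun i => (s6_v_le_cnorm v c i).trans hcM)
    have hkne : ((n + 2 - j : ℕ) : ℝ) ≠ 0 := Nat.cast_ne_zero.2 (by omega)
    calc (v (esymmK c (n + 2 - j))) ^ ((1 : ℝ) / ((n + 2 - j : ℕ) : ℝ))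
        ≤ (M ^ (n + 2 - j)) ^ ((1 : ℝ) / ((n + 2 - j : ℕ) : ℝ)) :=
          Real.rpow_le_rpow (v.nonneg _) hσ (by positivity)
      _ = M := by
          rw [← Real.rpow_natCast M (n + 2 - j), ← Real.rpow_mul hM0, mul_one_div,
            div_self hkne, Real.rpow_one]
  have hCv_ge : (1 : ℝ) ≤ Cv v c a := by
    refine le_trans ?_ (le_max_left _ _)
    rw [vd, Real.one_rpow]
  unfold Ctilde
  refine le_antisymm (max_le haM (max_le hcM hCv_le)) (max_le ?_ (max_le ?_ ?_))
  · exact hCv_ge.trans ((le_max_right _ _).trans (le_max_right _ _))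
  · exact (le_max_left _ _).trans (le_max_right _ _)
  · exact le_max_left _ _

lemma s6_hca_eq (hv : ∀ x y : K, v (x + y) ≤ max (v x) (v y)) {n : ℕ}
    (hj : ∀ j : ℕ, 1 ≤ j → j ≤ n + 2 → v ((j : ℕ) : K) = 1) (c : Fin n → K) (a z : K) :
    hca v c a z = Real.log (max (max 1 (max (cnorm v c) (v a))) (v z)) := by
  unfold hca
  rw [s6_Ctilde_eq v hv hj]

/-- If `max 1 (max |c| |a|) ≤ B` and `|z| ≤ B` then `|P_{c,a}(z)| ≤ B^(n+2)`. -/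
lemma s6_Pca_le (hv : ∀ x y : K, v (x + y) ≤ max (v x) (v y)) {n : ℕ}
    (hj : ∀ j : ℕ, 1 ≤ j → j ≤ n + 2 → v ((j : ℕ) : K) = 1) (c : Fin n → K) (a : K)
    {B : ℝ} (hB : max 1 (max (cnorm v c) (v a)) ≤ B) {z : K} (hz : v z ≤ B) :
    v (Pca c a z) ≤ B ^ (n + 2) := by
  have vd : v (((n + 2 : ℕ) : K)) = 1 := hj (n + 2) (by omega) le_rfl
  have h1B : (1 : ℝ) ≤ B := (le_max_left _ _).trans hB
  have hB0 : (0 : ℝ) ≤ B := zero_le_one.trans h1B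
  have hBpow : (0 : ℝ) ≤ B ^ (n + 2) := pow_nonneg hB0 _
  unfold Pca
  refine (hv _ _).trans (max_le ((hv _ _).trans (max_le ?_ ?_)) ?_)
  · rw [map_div₀, map_pow, vd, div_one]
    exact pow_le_pow_left₀ (v.nonneg z) hz _
  · refine s6_vsum_le v hv _ _ hBpow ?_
    intro j hjm
    rw [Finset.mem_Icc] at hjm
    have hj1 : v (((j : ℕ)) : K) = 1 := hj j (by omega) (by omega)
    rw [map_div₀, hj1, div_one, map_mul, map_mul, map_pow, map_pow, v.map_neg, v.map_one,
      one_pow, one_mul]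
    have h1 : v (esymmK c (n + 2 - j)) ≤ B ^ (n + 2 - j) :=
      s6_v_esymm_le v hv c _ hB0 (fun i =>
        (s6_v_le_cnorm v c i).trans (((le_max_left _ _).trans (le_max_right _ _)).trans hB))
    have h2 : (v z) ^ j ≤ B ^ j := pow_le_pow_left₀ (v.nonneg z) hz _
    calc v (esymmK c (n + 2 - j)) * (v z) ^ j ≤ B ^ (n + 2 - j) * B ^ j :=
          mul_le_mul h1 h2 (pow_nonneg (v.nonneg z) _) (pow_nonneg hB0 _)
      _ = B ^ (n + 2) := by rw [← pow_add]; congr 1; omega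
  · rw [map_pow]
    exact pow_le_pow_left₀ (v.nonneg a) (((le_max_right _ _).trans (le_max_right _ _)).trans hB) _

/-- Escape: if `|z| > max 1 (max |c| |a|)` then `|P_{c,a}(z)| = |z|^(n+2)`. -/
lemma s6_Pca_escape (hv : ∀ x y : K, v (x + y) ≤ max (v x) (v y)) {n : ℕ}
    (hj : ∀ j : ℕ, 1 ≤ j → j ≤ n + 2 → v ((j : ℕ) : K) = 1) (c : Fin n → K) (a : K)
    {z : K} (hz : max 1 (max (cnorm v c) (v a)) < v z) :
    v (Pca c a z) = (v z) ^ (n + 2) := by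
  have vd : v (((n + 2 : ℕ) : K)) = 1 := hj (n + 2) (by omega) le_rfl
  set M := max 1 (max (cnorm v c) (v a)) with hM
  have h1M : (1 : ℝ) ≤ M := le_max_left _ _
  have hM0 : (0 : ℝ) ≤ M := zero_le_one.trans h1M
  have hz0 : (0 : ℝ) < v z := lt_of_le_of_lt hM0 hz
  have hcM : cnorm v c ≤ M := (le_max_left _ _).trans (le_max_right _ _)
  have haM : v a ≤ M := (le_max_right _ _).trans (le_max_right _ _)
  have ht1 : v (z ^ (n + 2) / ((n + 2 : ℕ) : K)) = (v z) ^ (n + 2) := by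
    rw [map_div₀, map_pow, vd, div_one]
  unfold Pca
  rw [add_assoc]
  rw [s6_v_add_eq v hv, ht1]
  rw [ht1]
  have hMz : M * (v z) ^ (n + 1) < (v z) ^ (n + 2) := by
    have : (v z) * (v z) ^ (n + 1) = (v z) ^ (n + 2) := by ring
    rw [← this]
    exact mul_lt_mul_of_pos_right hz (pow_pos hz0 _)
  refine lt_of_le_of_lt ((hv _ _).trans (max_le ?_ ?_)) hMz
  · refine s6_vsum_le v hv _ _ (by positivity) ?_
    intro j hjm
    rw [Finset.mem_Icc] at hjm
    have hj1 : v (((j : ℕ)) : K) = 1 := hj j (by omega) (by omega)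
    rw [map_div₀, hj1, div_one, map_mul, map_mul, map_pow, map_pow, v.map_neg, v.map_one,
      one_pow, one_mul]
    have h1 : v (esymmK c (n + 2 - j)) ≤ M ^ (n + 2 - j) :=
      s6_v_esymm_le v hv c _ hM0 (fun i => (s6_v_le_cnorm v c i).trans hcM)
    have h2 : M ^ (n + 2 - j) ≤ M * (v z) ^ (n + 1 - j) := by
      have he : n + 2 - j = 1 + (n + 1 - j) := by omega
      rw [he, pow_add, pow_one]
      exact mul_le_mul_of_nonneg_left (pow_le_pow_left₀ hM0 hz.le _) hM0
    calc v (esymmK c (n + 2 - j)) * (v z) ^ j ≤ (M * (v z) ^ (n + 1 - j)) * (v z) ^ j :=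
          mul_le_mul (h1.trans h2) le_rfl (pow_nonneg (v.nonneg z) _)
            (by positivity)
      _ = M * (v z) ^ (n + 1) := by
          rw [mul_assoc, ← pow_add]
          congr 2
          omega
  · rw [map_pow]
    calc (v a) ^ (n + 2) ≤ M ^ (n + 2) := pow_le_pow_left₀ (v.nonneg a) haM _
      _ = M * M ^ (n + 1) := by ring
      _ ≤ M * (v z) ^ (n + 1) :=
          mul_le_mul_of_nonneg_left (pow_le_pow_left₀ hM0 hz.le _) hM0

end Aux

section Green

variable {K : Type*} [Field K] (v : AbsoluteValue K ℝ)

/-- Once the orbit escapes the ball of radius `M`, the Green sequence is eventually constant. -/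
lemma s6_green_escape (hv : ∀ x y : K, v (x + y) ≤ max (v x) (v y)) {n : ℕ}
    (hj : ∀ j : ℕ, 1 ≤ j → j ≤ n + 2 → v ((j : ℕ) : K) = 1) (c : Fin n → K) (a z : K)
    (m₀ : ℕ) (h : max 1 (max (cnorm v c) (v a)) < v ((Pca c a)^[m₀] z)) :
    Filter.Tendsto (fun m : ℕ => hca v c a ((Pca c a)^[m] z) / ((n : ℝ) + 2) ^ m)
      Filter.atTop (nhds (hca v c a ((Pca c a)^[m₀] z) / ((n : ℝ) + 2) ^ m₀)) := by
  set M := max 1 (max (cnorm v c) (v a)) with hM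
  have h1M : (1 : ℝ) ≤ M := le_max_left _ _
  have hdne : ((n : ℝ) + 2) ≠ 0 := by positivity
  have main : ∀ q : ℕ, M < v ((Pca c a)^[m₀ + q] z) ∧
      hca v c a ((Pca c a)^[m₀ + q] z) / ((n : ℝ) + 2) ^ (m₀ + q)
        = hca v c a ((Pca c a)^[m₀] z) / ((n : ℝ) + 2) ^ m₀ := by
    intro q
    induction q with
    | zero => exact ⟨h, rfl⟩
    | succ q ih =>
      obtain ⟨hq, hueq⟩ := ih
      have hw1 : (1 : ℝ) < v ((Pca c a)^[m₀ + q] z) := h1M.trans_lt hq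
      have hit : (Pca c a)^[m₀ + (q + 1)] z = Pca c a ((Pca c a)^[m₀ + q] z) :=
        Function.iterate_succ_apply' _ _ _
      have hesc : v ((Pca c a)^[m₀ + (q + 1)] z) = (v ((Pca c a)^[m₀ + q] z)) ^ (n + 2) := by
        rw [hit]; exact s6_Pca_escape v hv hj c a hq
      have hgt : M < (v ((Pca c a)^[m₀ + q] z)) ^ (n + 2) :=
        hq.trans_le (le_self_pow₀ hw1.le (by omega))
      refine ⟨by rw [hesc]; exact hgt, ?_⟩
      rw [← hueq, s6_hca_eq v hv hj, s6_hca_eq v hv hj, ← hM, hesc, max_eq_right hgt.le,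
        max_eq_right hq.le, Real.log_pow]
      have hDne : ((n : ℝ) + 2) ^ (m₀ + q) ≠ 0 := pow_ne_zero _ hdne
      rw [show m₀ + (q + 1) = (m₀ + q) + 1 from rfl, pow_succ]
      push_cast
      field_simp
  have hev : (fun _ : ℕ => hca v c a ((Pca c a)^[m₀] z) / ((n : ℝ) + 2) ^ m₀)
      =ᶠ[Filter.atTop] (fun m : ℕ => hca v c a ((Pca c a)^[m] z) / ((n : ℝ) + 2) ^ m) := by
    filter_upwards [Filter.eventually_ge_atTop m₀] with m hm
    obtain ⟨q, rfl⟩ := Nat.exists_eq_add_of_le hm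
    exact ((main q).2).symm
  exact Filter.Tendsto.congr' hev tendsto_const_nhds

lemma s6_green_bounded (hv : ∀ x y : K, v (x + y) ≤ max (v x) (v y)) {n : ℕ}
    (hj : ∀ j : ℕ, 1 ≤ j → j ≤ n + 2 → v ((j : ℕ) : K) = 1) (c : Fin n → K) (a z : K)
    (h : ∀ m : ℕ, v ((Pca c a)^[m] z) ≤ max 1 (max (cnorm v c) (v a))) :
    Filter.Tendsto (fun m : ℕ => hca v c a ((Pca c a)^[m] z) / ((n : ℝ) + 2) ^ m)
      Filter.atTop (nhds 0) := by
  have hd : Filter.Tendsto (fun m : ℕ => ((n : ℝ) + 2) ^ m) Filter.atTop Filter.atTop := by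
    apply tendsto_pow_atTop_atTop_of_one_lt
    have := Nat.cast_nonneg (α := ℝ) n
    linarith
  have hc : Filter.Tendsto (fun _ : ℕ => Real.log (max 1 (max (cnorm v c) (v a))))
      Filter.atTop (nhds (Real.log (max 1 (max (cnorm v c) (v a))))) := tendsto_const_nhds
  have h0 := Filter.Tendsto.div_atTop hc hd
  apply h0.congr
  intro m
  rw [s6_hca_eq v hv hj, max_eq_left (h m)]

lemma s6_green_exists (hv : ∀ x y : K, v (x + y) ≤ max (v x) (v y)) {n : ℕ}
    (hj : ∀ j : ℕ, 1 ≤ j → j ≤ n + 2 → v ((j : ℕ) : K) = 1) (c : Fin n → K) (a z : K) :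
    ∃ L : ℝ, Filter.Tendsto (fun m : ℕ => hca v c a ((Pca c a)^[m] z) / ((n : ℝ) + 2) ^ m)
      Filter.atTop (nhds L) := by
  by_cases h : ∀ m : ℕ, v ((Pca c a)^[m] z) ≤ max 1 (max (cnorm v c) (v a))
  · exact ⟨0, s6_green_bounded v hv hj c a z h⟩
  · push_neg at h
    obtain ⟨m₀, hm₀⟩ := h
    exact ⟨_, s6_green_escape v hv hj c a z m₀ hm₀⟩

/-- If the first image of `z` has absolute value exactly `M^(n+2)` with `M > 1`,
then the Green sequence converges to `log M`. -/
lemma s6_green_at_escape (hv : ∀ x y : K, v (x + y) ≤ max (v x) (v y)) {n : ℕ}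
    (hj : ∀ j : ℕ, 1 ≤ j → j ≤ n + 2 → v ((j : ℕ) : K) = 1) (c : Fin n → K) (a z : K)
    (hM : 1 < max 1 (max (cnorm v c) (v a)))
    (h1 : v (Pca c a z) = (max 1 (max (cnorm v c) (v a))) ^ (n + 2)) :
    Filter.Tendsto (fun m : ℕ => hca v c a ((Pca c a)^[m] z) / ((n : ℝ) + 2) ^ m)
      Filter.atTop (nhds (Real.log (max 1 (max (cnorm v c) (v a))))) := by
  set M := max 1 (max (cnorm v c) (v a)) with hMdef
  have hM0 : (0 : ℝ) < M := lt_trans zero_lt_one hM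
  have hMlt : M < M ^ (n + 2) := by
    calc M = 1 * M := (one_mul M).symm
      _ < M ^ (n + 1) * M := by
          refine mul_lt_mul_of_pos_right ?_ hM0
          exact one_lt_pow₀ hM (by omega)
      _ = M ^ (n + 2) := by ring
  have hesc : M < v ((Pca c a)^[1] z) := by
    rw [Function.iterate_one, h1]; exact hMlt
  have htend := s6_green_escape v hv hj c a z 1 hesc
  have hval : hca v c a ((Pca c a)^[1] z) / ((n : ℝ) + 2) ^ 1 = Real.log M := by
    rw [Function.iterate_one, s6_hca_eq v hv hj, ← hMdef, h1, max_eq_right hMlt.le,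
      Real.log_pow, pow_one]
    have hne : ((n : ℝ) + 2) ≠ 0 := by positivity
    push_cast
    rw [mul_comm, mul_div_assoc, div_self hne, mul_one]
  rwa [hval] at htend

end Green

section Algebra

open Polynomial

/-- A polynomial of degree `≤ n+2` over a field with large characteristic, whose derivative is
`X·∏(X - βᵢ)` and which vanishes at `0` and at every `βᵢ`, must have all `βᵢ = 0`. -/
lemma s6_lemA {F : Type*} [Field F] {n : ℕ} (β : Fin n → F) (f : Polynomial F)
    (hf0 : f ≠ 0) (hdeg : f.natDegree ≤ n + 2)
    (hder : derivative f = X * ∏ i, (X - C (β i)))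
    (h0 : f.IsRoot 0) (hβ : ∀ i, f.IsRoot (β i))
    (hchar : ∀ s : ℕ, 1 ≤ s → s ≤ n + 2 → (s : F) ≠ 0) :
    ∀ i, β i = 0 := by
  classical
  set s : Multiset F := 0 ::ₘ (Finset.univ.val.map β) with hs
  have hcard : Multiset.card s = n + 1 := by simp [hs]
  have hprod : derivative f = (s.map fun a => X - C a).prod := by
    rw [hder, hs, Multiset.map_cons, Multiset.prod_cons, map_zero, sub_zero,
      Multiset.map_map, Finset.prod_eq_multiset_prod]
    rfl
  have hroot : ∀ a ∈ s, f.IsRoot a := by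
    intro a ha
    rw [hs, Multiset.mem_cons] at ha
    rcases ha with rfl | ha
    · exact h0
    · obtain ⟨i, _, rfl⟩ := Multiset.mem_map.1 ha
      exact hβ i
  have hmult : ∀ a ∈ s.toFinset, f.rootMultiplicity a = s.count a + 1 := by
    intro a ha
    have haroot := hroot a (Multiset.mem_toFinset.1 ha)
    have hpos : 1 ≤ f.rootMultiplicity a := (Polynomial.rootMultiplicity_pos hf0).2 haroot
    have hle : f.rootMultiplicity a ≤ n + 2 := by
      calc f.rootMultiplicity a = f.roots.count a := (count_roots f).symm
        _ ≤ Multiset.card f.roots := Multiset.count_le_card _ _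
        _ ≤ f.natDegree := f.card_roots'
        _ ≤ n + 2 := hdeg
    have hnz : ((f.rootMultiplicity a : F)) ∈ nonZeroDivisors F :=
      mem_nonZeroDivisors_of_ne_zero (hchar _ hpos hle)
    have hD := derivative_rootMultiplicity_of_root_of_mem_nonZeroDivisors haroot hnz
    have hcnt : (derivative f).rootMultiplicity a = s.count a := by
      rw [← count_roots, hprod, roots_multiset_prod_X_sub_C]
    omega
  have hsub : s.toFinset ⊆ f.roots.toFinset := by
    intro a ha
    rw [Multiset.mem_toFinset, mem_roots']
    exact ⟨hf0, hroot a (Multiset.mem_toFinset.1 ha)⟩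
  have hsum1 : ∑ a ∈ s.toFinset, f.roots.count a ≤ Multiset.card f.roots := by
    rw [← Multiset.toFinset_sum_count_eq f.roots]
    exact Finset.sum_le_sum_of_subset hsub
  have hsum2 : ∑ a ∈ s.toFinset, s.count a = n + 1 := by
    rw [Multiset.toFinset_sum_count_eq s, hcard]
  have hcard1 : s.toFinset.card ≤ 1 := by
    have h1 : ∑ a ∈ s.toFinset, f.roots.count a = ∑ a ∈ s.toFinset, (s.count a + 1) := by
      refine Finset.sum_congr rfl fun a ha => ?_
      rw [count_roots, hmult a ha]
    rw [h1, Finset.sum_add_distrib, hsum2, Finset.sum_const, smul_eq_mul, mul_one] at hsum1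
    have h2 : Multiset.card f.roots ≤ n + 2 := f.card_roots'.trans hdeg
    omega
  have h0mem : (0 : F) ∈ s.toFinset := by simp [hs]
  intro i
  have hβmem : β i ∈ s.toFinset := by
    rw [Multiset.mem_toFinset, hs, Multiset.mem_cons]
    right
    exact Multiset.mem_map.2 ⟨i, by simp, rfl⟩
  exact Finset.card_le_one.1 hcard1 _ hβmem _ h0mem

lemma s6_esymmK_zero {K : Type*} [Field K] {n : ℕ} (b : Fin n → K) : esymmK b 0 = 1 := by
  simp [esymmK]

lemma s6_Pca_sum_form {K : Type*} [Field K] {n : ℕ} (b : Fin n → K) (w : K) :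
    Pca b 0 w = ∑ j ∈ Finset.Icc 2 (n + 2),
      ((-1 : K) ^ (n + 2 - j) * esymmK b (n + 2 - j) * w ^ j) / ((j : ℕ) : K) := by
  rw [show Finset.Icc 2 (n + 2) = insert (n + 2) (Finset.Icc 2 (n + 1)) from
      (Finset.insert_Icc_right_eq_Icc_add_one (by omega)).symm,
    Finset.sum_insert (by simp)]
  unfold Pca
  rw [Nat.sub_self, pow_zero, s6_esymmK_zero, one_mul, one_mul, zero_pow (by omega : n + 2 ≠ 0),
    add_zero, add_comm]

end Algebra

section Key

open Polynomial

set_option maxHeartbeats 1000000 in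
set_option synthInstance.maxHeartbeats 200000 in
/-- The heart of the argument: if all `|bᵢ| ≤ 1` and some `|b_{i₀}| = 1`, then some
critical value of `P_{b,0}` has absolute value exactly `1`. -/
lemma s6_key {K : Type*} [Field K] [CharZero K] (v : AbsoluteValue K ℝ)
    (hv : ∀ x y : K, v (x + y) ≤ max (v x) (v y)) {n : ℕ}
    (hj : ∀ j : ℕ, 1 ≤ j → j ≤ n + 2 → v ((j : ℕ) : K) = 1)
    (b : Fin n → K) (hb : ∀ i, v (b i) ≤ 1) (i₀ : Fin n) (hb0 : v (b i₀) = 1) :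
    ∃ i, v (Pca b 0 (b i)) = 1 := by
  classical
  by_contra hcon
  push_neg at hcon
  have hble : ∀ i, v (Pca b 0 (b i)) ≤ 1 := by
    intro i
    have hB : max 1 (max (cnorm v b) (v (0 : K))) ≤ (1 : ℝ) := by
      refine max_le le_rfl (max_le (s6_cnorm_le v zero_le_one hb) ?_)
      rw [map_zero]
      exact zero_le_one
    simpa using s6_Pca_le v hv hj b 0 hB (hb i)
  have hlt : ∀ i, v (Pca b 0 (b i)) < 1 := fun i => (hble i).lt_of_ne (hcon i)
  -- the valuation subring and its maximal ideal
  let O : Subring K :=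
    { carrier := {x | v x ≤ 1}
      mul_mem' := fun {x y} hx hy => by
        simp only [Set.mem_setOf_eq] at *
        rw [map_mul]
        exact mul_le_one₀ hx (v.nonneg y) hy
      one_mem' := by simp only [Set.mem_setOf_eq, map_one, le_refl]
      add_mem' := fun {x y} hx hy => (hv x y).trans (max_le hx hy)
      zero_mem' := by simp only [Set.mem_setOf_eq, map_zero]; exact zero_le_one
      neg_mem' := fun {x} hx => by
        simp only [Set.mem_setOf_eq] at *
        rwa [v.map_neg] }
  have hOmem : ∀ x : K, x ∈ O ↔ v x ≤ 1 := fun x => Iff.rfl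
  let m : Ideal O :=
    { carrier := {x | v (x : K) < 1}
      add_mem' := fun {x y} hx hy => lt_of_le_of_lt (hv _ _) (max_lt hx hy)
      zero_mem' := by
        show v ((0 : O) : K) < 1
        rw [ZeroMemClass.coe_zero, map_zero]
        exact zero_lt_one
      smul_mem' := fun r x hx => by
        have hco : ((r • x : O) : K) = (r : K) * (x : K) := rfl
        show v ((r • x : O) : K) < 1
        rw [hco, map_mul]
        exact lt_of_le_of_lt (mul_le_of_le_one_left (v.nonneg _) r.2) hx }
  have hmmem : ∀ x : O, x ∈ m ↔ v (x : K) < 1 := fun x => Iff.rfl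
  have hmax : m.IsMaximal := by
    rw [Ideal.isMaximal_iff]
    constructor
    · intro h1
      rw [hmmem] at h1
      simp only [Subring.coe_one, map_one] at h1
      exact lt_irrefl _ h1
    · rintro J x hIJ hxm hxJ
      have hx1 : v (x : K) = 1 := le_antisymm x.2 (not_lt.1 fun h => hxm ((hmmem x).2 h))
      have hx0 : (x : K) ≠ 0 := by
        intro h
        rw [h, map_zero] at hx1
        norm_num at hx1
      have hinv : ((x : K)⁻¹) ∈ O := by
        rw [hOmem, map_inv₀, hx1]
        norm_num
      have hone : (⟨(x : K)⁻¹, hinv⟩ : O) * x = 1 := by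
        apply Subtype.ext
        show (x : K)⁻¹ * (x : K) = 1
        exact inv_mul_cancel₀ hx0
      exact hone ▸ J.mul_mem_left _ hxJ
  haveI := hmax
  letI : Field (O ⧸ m) := Ideal.Quotient.field m
  let φ : O →+* O ⧸ m := Ideal.Quotient.mk m
  have hker : ∀ x : O, φ x = 0 ↔ v (x : K) < 1 := fun x =>
    (Ideal.Quotient.eq_zero_iff_mem).trans (hmmem x)
  have hunit : ∀ x : O, v (x : K) = 1 → φ x ≠ 0 := by
    intro x hx h
    rw [hker, hx] at h
    exact lt_irrefl _ h
  -- reductions of the b i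
  let bO : Fin n → O := fun i => ⟨b i, hb i⟩
  let β : Fin n → (O ⧸ m) := fun i => φ (bO i)
  -- elementary symmetric functions are in O and reduce compatibly
  have hesymm_mem : ∀ r : ℕ, esymmK b r ∈ O := by
    intro r
    rw [hOmem]
    have := s6_v_esymm_le v hv b r zero_le_one hb
    rwa [one_pow] at this
  let eO : ℕ → O := fun r => ⟨esymmK b r, hesymm_mem r⟩
  have hcoe_sum : ∀ {ι : Type} (s : Finset ι) (g : ι → O),
      ((∑ j ∈ s, g j : O) : K) = ∑ j ∈ s, ((g j : K)) := by
    intro ι s g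
    simpa using map_sum O.subtype g s
  have hesymm_red : ∀ r : ℕ, esymmK β r = φ (eO r) := by
    intro r
    have h1 : eO r = ∑ s ∈ Finset.powersetCard r Finset.univ, ∏ i ∈ s, bO i := by
      apply Subtype.ext
      rw [hcoe_sum]
      show esymmK b r = _
      unfold esymmK
      refine Finset.sum_congr rfl fun s _ => ?_
      exact (map_prod O.subtype bO s).symm
    rw [h1, map_sum]
    unfold esymmK
    refine Finset.sum_congr rfl fun s _ => ?_
    rw [map_prod]
  -- the coefficients
  have hq_mem : ∀ j : ℕ, (if 2 ≤ j ∧ j ≤ n + 2 then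
      ((-1 : K) ^ (n + 2 - j) * esymmK b (n + 2 - j)) / ((j : ℕ) : K) else 0) ∈ O := by
    intro j
    rw [hOmem]
    split_ifs with h
    · rw [map_div₀, map_mul, map_pow, v.map_neg, v.map_one, one_pow, one_mul,
        hj j (by omega) h.2, div_one]
      have := s6_v_esymm_le v hv b (n + 2 - j) zero_le_one hb
      rwa [one_pow] at this
    · rw [map_zero]; exact zero_le_one
  let qO : ℕ → O := fun j => ⟨_, hq_mem j⟩
  have hqO_coe : ∀ j ∈ Finset.Icc 2 (n + 2), (qO j : K)
      = ((-1 : K) ^ (n + 2 - j) * esymmK b (n + 2 - j)) / ((j : ℕ) : K) := by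
    intro j hjm
    rw [Finset.mem_Icc] at hjm
    show (if 2 ≤ j ∧ j ≤ n + 2 then _ else 0) = _
    rw [if_pos hjm]
  -- the reduced polynomial
  let f : Polynomial (O ⧸ m) := ∑ j ∈ Finset.Icc 2 (n + 2), C (φ (qO j)) * X ^ j
  have hfeval : ∀ w : O, f.eval (φ w) = φ (∑ j ∈ Finset.Icc 2 (n + 2), qO j * w ^ j) := by
    intro w
    show (∑ j ∈ Finset.Icc 2 (n + 2), C (φ (qO j)) * X ^ j).eval (φ w) = _
    rw [map_sum, eval_finset_sum]
    exact Finset.sum_congr rfl fun j _ => by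
      rw [eval_mul, eval_C, eval_pow, eval_X, map_mul, map_pow]
  have hval : ∀ i, ((∑ j ∈ Finset.Icc 2 (n + 2), qO j * bO i ^ j : O) : K)
      = Pca b 0 (b i) := by
    intro i
    rw [s6_Pca_sum_form, hcoe_sum]
    refine Finset.sum_congr rfl fun j hjm => ?_
    push_cast
    rw [Finset.mem_Icc] at hjm
    rw [hqO_coe j (Finset.mem_Icc.2 hjm)]
    exact div_mul_eq_mul_div _ _ _
  have hfroot : ∀ i, f.IsRoot (β i) := by
    intro i
    show f.eval (φ (bO i)) = 0
    rw [hfeval (bO i), hker, hval i]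
    exact hlt i
  have hfdeg : f.natDegree ≤ n + 2 := by
    show (∑ j ∈ Finset.Icc 2 (n + 2), C (φ (qO j)) * X ^ j).natDegree ≤ n + 2
    apply Polynomial.natDegree_sum_le_of_forall_le
    intro j hjm
    rw [Finset.mem_Icc] at hjm
    exact (natDegree_C_mul_le _ _).trans (by rw [natDegree_X_pow]; exact hjm.2)
  have htopcoe : v ((qO (n + 2) : K)) = 1 := by
    rw [hqO_coe (n + 2) (by rw [Finset.mem_Icc]; omega), Nat.sub_self, pow_zero,
      s6_esymmK_zero, one_mul, map_div₀, map_one, hj (n + 2) (by omega) le_rfl]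
    norm_num
  have hcoefftop : f.coeff (n + 2) = φ (qO (n + 2)) := by
    show (∑ j ∈ Finset.Icc 2 (n + 2), C (φ (qO j)) * X ^ j).coeff (n + 2) = _
    rw [finset_sum_coeff, Finset.sum_eq_single (n + 2)]
    · rw [coeff_C_mul, coeff_X_pow, if_pos rfl, mul_one]
    · intro j _ hne
      rw [coeff_C_mul, coeff_X_pow, if_neg (fun hh => hne hh.symm), mul_zero]
    · intro hmem
      exact absurd (by rw [Finset.mem_Icc]; omega) hmem
  have hftop_ne : f.coeff (n + 2) ≠ 0 := by
    rw [hcoefftop]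
    exact hunit _ htopcoe
  have hf0 : f ≠ 0 := fun h => hftop_ne (by rw [h, coeff_zero])
  have hfzero : f.IsRoot 0 := by
    have hz : (∑ j ∈ Finset.Icc 2 (n + 2), C (φ (qO j)) * X ^ j).eval (0 : O ⧸ m) = 0 := by
      rw [eval_finset_sum]
      refine Finset.sum_eq_zero fun j hjm => ?_
      rw [Finset.mem_Icc] at hjm
      rw [eval_mul, eval_pow, eval_X, zero_pow (by omega : j ≠ 0), mul_zero]
    exact hz
  -- derivative computation
  have hql : ∀ j ∈ Finset.Icc 2 (n + 2), φ (qO j) * ((j : ℕ) : O ⧸ m)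
      = (-1) ^ (n + 2 - j) * esymmK β (n + 2 - j) := by
    intro j hjm
    have hjm' := Finset.mem_Icc.1 hjm
    have hjne : ((j : ℕ) : K) ≠ 0 := Nat.cast_ne_zero.2 (by omega)
    have h1 : qO j * ((j : ℕ) : O) = ((-1 : O) ^ (n + 2 - j)) * eO (n + 2 - j) := by
      apply Subtype.ext
      push_cast
      rw [hqO_coe j hjm]
      exact div_mul_cancel₀ _ hjne
    calc φ (qO j) * ((j : ℕ) : O ⧸ m) = φ (qO j * ((j : ℕ) : O)) := by
          rw [map_mul, map_natCast]
      _ = φ (((-1 : O) ^ (n + 2 - j)) * eO (n + 2 - j)) := by rw [h1]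
      _ = (-1) ^ (n + 2 - j) * esymmK β (n + 2 - j) := by
          rw [map_mul, map_pow, map_neg, map_one, hesymm_red]
  have hder : derivative f = X * ∏ i, (X - C (β i)) := by
    show derivative (∑ j ∈ Finset.Icc 2 (n + 2), C (φ (qO j)) * X ^ j) = _
    rw [derivative_sum]
    have hL : ∀ j ∈ Finset.Icc 2 (n + 2),
        derivative (C (φ (qO j)) * X ^ j)
          = C ((-1) ^ (n + 2 - j) * esymmK β (n + 2 - j)) * X ^ (j - 1) := by
      intro j hjm
      rw [derivative_C_mul_X_pow, hql j hjm]
    rw [Finset.sum_congr rfl hL]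
    have hRHS : (X : Polynomial (O ⧸ m)) * ∏ i, (X - C (β i))
        = ∑ r ∈ Finset.range (n + 1), C ((-1) ^ r * esymmK β r) * X ^ (n - r + 1) := by
      have hv1 : (∏ i, (X - C (β i)) : Polynomial (O ⧸ m))
          = ((Finset.univ.val.map β).map fun t => X - C t).prod := by
        rw [Multiset.map_map, Finset.prod_eq_multiset_prod]
        rfl
      rw [hv1, Multiset.prod_X_sub_X_eq_sum_esymm]
      have hcards : Multiset.card (Finset.univ.val.map β) = n := by simp
      rw [hcards, Finset.mul_sum]
      refine Finset.sum_congr rfl fun r hr => ?_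
      have hesy : (Finset.univ.val.map β).esymm r = esymmK β r := by
        rw [Finset.esymm_map_val]
        rfl
      rw [hesy, map_mul, map_pow, map_neg, map_one]
      ring
    rw [hRHS]
    refine Finset.sum_nbij' (fun j => n + 2 - j) (fun r => n + 2 - r) ?_ ?_ ?_ ?_ ?_
    · intro j hjm
      simp only [Finset.mem_Icc, Finset.mem_range] at *
      omega
    · intro r hr
      simp only [Finset.mem_Icc, Finset.mem_range] at *
      omega
    · intro j hjm
      simp only [Finset.mem_Icc] at hjm
      omega
    · intro r hr
      simp only [Finset.mem_range] at hr
      omega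
    · intro j hjm
      simp only [Finset.mem_Icc] at hjm
      congr 2
      omega
  -- large characteristic
  have hchar' : ∀ s : ℕ, 1 ≤ s → s ≤ n + 2 → ((s : ℕ) : O ⧸ m) ≠ 0 := by
    intro s h1 h2
    have heq : ((s : ℕ) : O ⧸ m) = φ ((s : ℕ) : O) := (map_natCast φ s).symm
    rw [heq]
    apply hunit
    have : (((s : ℕ) : O) : K) = ((s : ℕ) : K) := by push_cast; rfl
    rw [this]
    exact hj s h1 h2
  have hzero := s6_lemA β f hf0 hfdeg hder hfzero hfroot hchar'
  have hβ0 : φ (bO i₀) = 0 := hzero i₀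
  rw [hker] at hβ0
  have : v (b i₀) < 1 := hβ0
  rw [hb0] at this
  exact lt_irrefl _ this

/-- Scaling: if `|a| < |c|` then some critical value has absolute value `|c|^(n+2)`. -/
lemma s6_key2 {K : Type*} [Field K] [CharZero K] (v : AbsoluteValue K ℝ)
    (hv : ∀ x y : K, v (x + y) ≤ max (v x) (v y)) {n : ℕ}
    (hj : ∀ j : ℕ, 1 ≤ j → j ≤ n + 2 → v ((j : ℕ) : K) = 1)
    (c : Fin n → K) (a : K) (hca' : v a < cnorm v c) :
    ∃ i : Fin n, v (Pca c a (c i)) = (cnorm v c) ^ (n + 2) := by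
  have hpos : 0 < cnorm v c := (v.nonneg a).trans_lt hca'
  obtain ⟨i₀, hi₀⟩ := s6_exists_cnorm_eq v hpos
  set u := c i₀ with hu
  have hvu : v u = cnorm v c := hi₀
  have hu0 : u ≠ 0 := by
    intro h
    rw [h, map_zero] at hvu
    exact hpos.ne hvu
  set b : Fin n → K := fun i => c i / u with hbdef
  have hbc : ∀ i, c i = u * b i := by
    intro i
    show c i = u * (c i / u)
    rw [mul_comm, div_mul_cancel₀ _ hu0]
  have hb : ∀ i, v (b i) ≤ 1 := by
    intro i
    show v (c i / u) ≤ 1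
    rw [map_div₀, hvu, div_le_one hpos]
    exact s6_v_le_cnorm v c i
  have hb0 : v (b i₀) = 1 := by
    show v (c i₀ / u) = 1
    rw [map_div₀, ← hu, hvu]
    exact div_self hpos.ne'
  obtain ⟨i, hi⟩ := s6_key v hv hj b hb i₀ hb0
  refine ⟨i, ?_⟩
  have hesymm : ∀ r : ℕ, esymmK c r = u ^ r * esymmK b r := by
    intro r
    unfold esymmK
    rw [Finset.mul_sum]
    refine Finset.sum_congr rfl fun s hs => ?_
    have hcard := (Finset.mem_powersetCard.1 hs).2
    calc ∏ j ∈ s, c j = ∏ j ∈ s, (u * b j) := Finset.prod_congr rfl fun j _ => hbc j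
      _ = u ^ s.card * ∏ j ∈ s, b j := by rw [Finset.prod_mul_distrib, Finset.prod_const]
      _ = u ^ r * ∏ j ∈ s, b j := by rw [hcard]
  have hident : Pca c a (c i) = u ^ (n + 2) * Pca b 0 (b i) + a ^ (n + 2) := by
    rw [hbc i]
    unfold Pca
    rw [zero_pow (by omega : n + 2 ≠ 0), add_zero, mul_add, Finset.mul_sum]
    congr 1
    · congr 1
      · rw [mul_pow, mul_div_assoc]
      · refine Finset.sum_congr rfl fun j hjm => ?_
        have hjm' := Finset.mem_Icc.1 hjm
        rw [hesymm (n + 2 - j)]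
        have hstep : (-1 : K) ^ (n + 2 - j) * (u ^ (n + 2 - j) * esymmK b (n + 2 - j))
            * (u * b i) ^ j
            = u ^ (n + 2) * ((-1 : K) ^ (n + 2 - j) * esymmK b (n + 2 - j) * (b i) ^ j) := by
          rw [show u ^ (n + 2) = u ^ (n + 2 - j) * u ^ j by
            rw [← pow_add]; congr 1; omega]
          rw [mul_pow]
          ring
        rw [hstep, mul_div_assoc]
  rw [hident]
  have h1 : v (u ^ (n + 2) * Pca b 0 (b i)) = (cnorm v c) ^ (n + 2) := by
    rw [map_mul, map_pow, hvu, hi, mul_one]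
  rw [s6_v_add_eq v hv, h1]
  rw [h1, map_pow]
  exact pow_lt_pow_left₀ hca' (v.nonneg a) (by omega)

end Key

/-- if `|j|_v = 1` for every integer `1 ≤ j ≤ d`, then
`G_v(c,a) = log⁺ max{|c|_v, |a|_v}` for every `(c,a) ∈ K^{d-1}`, where
`G_v(c,a) = max_i g_{c,a,v}(c_i)` and `d = n + 2`. -/
theorem statement6 {K : Type*} [Field K] [IsAlgClosed K] [CharZero K]
    (v : AbsoluteValue K ℝ) (hv : ∀ x y : K, v (x + y) ≤ max (v x) (v y)) (n : ℕ)
    (hj : ∀ j : ℕ, 1 ≤ j → j ≤ n + 2 → v ((j : ℕ) : K) = 1) :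
    ∃ g : (Fin n → K) → K → K → ℝ,
      -- `g` is the `v`-adic Green function, `g_{c,a,v}(z) = lim_m d^{-m} h_{c,a,v}(P_{c,a}^m(z))`
      (∀ (c : Fin n → K) (a z : K),
        Tendsto (fun m : ℕ => hca v c a ((Pca c a)^[m] z) / ((n : ℝ) + 2) ^ m)
          atTop (nhds (g c a z))) ∧
      -- `G_v(c,a) = log⁺ max{|c|_v, |a|_v}`
      ∀ (c : Fin n → K) (a : K),
        (Finset.univ.sup' Finset.univ_nonempty fun i : Fin (n + 1) => g c a (crit c i))
          = logPlus (max (cnorm v c) (v a)) := by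
  classical
  refine ⟨fun c a z => (s6_green_exists v hv hj c a z).choose,
    fun c a z => (s6_green_exists v hv hj c a z).choose_spec, fun c a => ?_⟩
  show Finset.univ.sup' Finset.univ_nonempty
      (fun i : Fin (n + 1) => (s6_green_exists v hv hj c a (crit c i)).choose)
    = logPlus (max (cnorm v c) (v a))
  set M := max 1 (max (cnorm v c) (v a)) with hMdef
  have h1M : (1 : ℝ) ≤ M := le_max_left _ _
  have hcM : cnorm v c ≤ M := (le_max_left _ _).trans (le_max_right _ _)
  have haM : v a ≤ M := (le_max_right _ _).trans (le_max_right _ _)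
  have hM0 : (0 : ℝ) ≤ M := zero_le_one.trans h1M
  have hg : ∀ z : K, Tendsto (fun m : ℕ => hca v c a ((Pca c a)^[m] z) / ((n : ℝ) + 2) ^ m)
      atTop (nhds ((s6_green_exists v hv hj c a z).choose)) :=
    fun z => (s6_green_exists v hv hj c a z).choose_spec
  have hLP : logPlus (max (cnorm v c) (v a)) = Real.log M := by
    unfold logPlus
    rcases le_or_gt (max (cnorm v c) (v a)) 1 with h | h
    · rw [hMdef, max_eq_left h, Real.log_one]
      rcases eq_or_lt_of_le ((s6_cnorm_nonneg v c).trans (le_max_left _ (v a))) with h0 | h0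
      · rw [← h0, Real.log_zero, max_self]
      · exact max_eq_left (Real.log_nonpos h0.le h)
    · rw [hMdef, max_eq_right h.le]
      exact max_eq_right (Real.log_nonneg h.le)
  rw [hLP]
  have hcrit : ∀ i : Fin (n + 1), v (crit c i) ≤ M := by
    intro i
    unfold crit
    split_ifs with h
    · rw [map_zero]; exact hM0
    · exact (s6_v_le_cnorm v c _).trans hcM
  have hub : ∀ z : K, v z ≤ M → (s6_green_exists v hv hj c a z).choose ≤ Real.log M := by
    intro z hz
    have horb : ∀ m : ℕ, v ((Pca c a)^[m] z) ≤ M ^ ((n + 2) ^ m) := by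
      intro m
      induction m with
      | zero => simpa using hz
      | succ m ih =>
        have hMB : M ≤ M ^ ((n + 2) ^ m) := le_self_pow₀ h1M (by positivity)
        rw [Function.iterate_succ_apply']
        calc v (Pca c a ((Pca c a)^[m] z)) ≤ (M ^ ((n + 2) ^ m)) ^ (n + 2) :=
              s6_Pca_le v hv hj c a hMB ih
          _ = M ^ ((n + 2) ^ (m + 1)) := by rw [← pow_mul, ← pow_succ]
    have hbound : ∀ m : ℕ, hca v c a ((Pca c a)^[m] z) / ((n : ℝ) + 2) ^ m ≤ Real.log M := by
      intro m
      rw [s6_hca_eq v hv hj, ← hMdef]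
      have hmaxle : max M (v ((Pca c a)^[m] z)) ≤ M ^ ((n + 2) ^ m) :=
        max_le (le_self_pow₀ h1M (by positivity)) (horb m)
      have hpos : (0 : ℝ) < max M (v ((Pca c a)^[m] z)) :=
        lt_of_lt_of_le zero_lt_one (h1M.trans (le_max_left _ _))
      have hlog := Real.log_le_log hpos hmaxle
      rw [Real.log_pow] at hlog
      have hd : (0 : ℝ) < ((n : ℝ) + 2) ^ m := by positivity
      rw [div_le_iff₀ hd]
      refine hlog.trans (le_of_eq ?_)
      push_cast
      ring
    exact le_of_tendsto (hg z) (Filter.Eventually.of_forall hbound)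
  have hlb0 : ∀ z : K, 0 ≤ (s6_green_exists v hv hj c a z).choose := by
    intro z
    refine ge_of_tendsto (hg z) (Filter.Eventually.of_forall fun m => ?_)
    rw [s6_hca_eq v hv hj, ← hMdef]
    apply div_nonneg _ (by positivity)
    exact Real.log_nonneg (h1M.trans (le_max_left _ _))
  refine le_antisymm (Finset.sup'_le _ _ fun i _ => hub _ (hcrit i)) ?_
  rcases eq_or_lt_of_le h1M with h1 | h1
  · rw [← h1, Real.log_one]
    exact le_trans (hlb0 (crit c 0))
      (Finset.le_sup' (fun i : Fin (n + 1) => (s6_green_exists v hv hj c a (crit c i)).choose)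
        (Finset.mem_univ (0 : Fin (n + 1))))
  · have hx1 : 1 < max (cnorm v c) (v a) := by
      by_contra hx
      push_neg at hx
      rw [hMdef, max_eq_left hx] at h1
      exact lt_irrefl _ h1
    have hexists : ∃ i : Fin (n + 1), v (Pca c a (crit c i)) = M ^ (n + 2) := by
      rcases le_or_gt (cnorm v c) (v a) with hle | hgt
      · refine ⟨0, ?_⟩
        have hva : M = v a := by rw [hMdef, max_eq_right hx1.le, max_eq_right hle]
        have hc0 : crit c (0 : Fin (n + 1)) = 0 := by simp [crit]
        have hP0 : Pca c a 0 = a ^ (n + 2) := by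
          have hsum0 : ∑ j ∈ Finset.Icc 2 (n + 1),
              ((-1 : K) ^ (n + 2 - j) * esymmK c (n + 2 - j) * (0 : K) ^ j) / ((j : ℕ) : K)
              = 0 := by
            refine Finset.sum_eq_zero fun j hjm => ?_
            rw [Finset.mem_Icc] at hjm
            rw [zero_pow (by omega : j ≠ 0), mul_zero, zero_div]
          unfold Pca
          rw [zero_pow (by omega : n + 2 ≠ 0), zero_div, zero_add, hsum0, zero_add]
        rw [hc0, hP0, map_pow, hva]
      · obtain ⟨i, hi⟩ := s6_key2 v hv hj c a hgt
        refine ⟨i.succ, ?_⟩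
        have hMc : M = cnorm v c := by rw [hMdef, max_eq_right hx1.le, max_eq_left hgt.le]
        have hcsucc : crit c i.succ = c i := by
          unfold crit
          rw [dif_neg (by simp [Fin.val_succ])]
          congr 1
          all_goals exact Fin.ext (by simp [Fin.val_succ])
        rw [hcsucc, hi, hMc]
    obtain ⟨i, hi⟩ := hexists
    have htd := s6_green_at_escape v hv hj c a (crit c i) h1 hi
    have hgi : (s6_green_exists v hv hj c a (crit c i)).choose = Real.log M :=
      tendsto_nhds_unique (hg (crit c i)) htd
    rw [← hgi]
    exact Finset.le_sup'
      (fun i : Fin (n + 1) => (s6_green_exists v hv hj c a (crit c i)).choose)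
      (Finset.mem_univ i)
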